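/- For every D > 0 there exist δ₀ < ∞ and C < ∞ such that: for every δ > 0 the function E_δ(a) := τ(a) + (δ−a)²/(2D) attains its minimum over a ∈ [0, ∞), and for every δ ≥ δ₀ every minimizer a*(δ) satisfies 0 ≤ δ − a*(δ) ≤ C; in particular limsup_{δ→∞} (δ − a*(δ)) < ∞. -/

import Mathlib

/-- The set of surface-tension values available at area `a`: values `τ²_ℓ(a)` of type-2
stacks (`ℓ ≥ 1`, `ℓw ≤ a ≤ 4ℓ`) together with values `τ¹_ℓ(a)` of type-1 stacks
(`ℓ ≥ 1`, radius `r ∈ [0,1]` solving `(ℓ−1)(4−(4−w)r²) + w·r² = a`, and `a` in the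
admissible type-1 range). -/
def tauVals (w : ℝ) (a : ℝ) : Set ℝ :=
  {t | ∃ ℓ : ℕ, 1 ≤ ℓ ∧ (ℓ : ℝ) * w ≤ a ∧ a ≤ 4 * (ℓ : ℝ) ∧
        t = 8 * (ℓ : ℝ) - 2 * Real.sqrt ((4 * (ℓ : ℝ) - a) * ((4 - w) * (ℓ : ℝ)))} ∪
  {t | ∃ ℓ : ℕ, 1 ≤ ℓ ∧ ∃ r : ℝ, r ∈ Set.Icc (0 : ℝ) 1 ∧
        ((ℓ : ℝ) - 1) * (4 - (4 - w) * r ^ 2) + w * r ^ 2 = a ∧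
        (((ℓ : ℝ) < 4 / (4 - w) ∧ 4 * ((ℓ : ℝ) - 1) ≤ a ∧ a ≤ (ℓ : ℝ) * w) ∨
         (4 / (4 - w) < (ℓ : ℝ) ∧ (ℓ : ℝ) * w ≤ a ∧ a ≤ 4 * ((ℓ : ℝ) - 1))) ∧
        t = ((ℓ : ℝ) - 1) * (8 - 2 * r * (4 - w)) + 2 * r * w}

/-- The minimal surface tension `τ(a)`: `τ(0) = 0` and, for `a > 0`, the infimum of the
available type-1 and type-2 surface tensions at area `a`. -/
noncomputable def tauMin (w : ℝ) (a : ℝ) : ℝ :=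
  if a = 0 then 0 else sInf (tauVals w a)

set_option maxHeartbeats 1000000

section Aux

variable {w : ℝ}

lemma tauVals_nonneg (hw0 : 0 < w) (hw4 : w < 4) {a t : ℝ} (ht : t ∈ tauVals w a) :
    0 ≤ t := by
  rcases ht with ⟨ℓ, hℓ, h1, h2, rfl⟩ | ⟨ℓ, hℓ, r, ⟨hr0, hr1⟩, heq, hdisj, rfl⟩
  · have hL : (1:ℝ) ≤ (ℓ:ℝ) := by exact_mod_cast hℓ
    have hx : (4 * (ℓ:ℝ) - a) * ((4 - w) * (ℓ:ℝ)) ≤ (4*(ℓ:ℝ))^2 := by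
      nlinarith [mul_nonneg (by nlinarith : (0:ℝ) ≤ a) (by nlinarith : (0:ℝ) ≤ (4-w)*(ℓ:ℝ)),
        mul_nonneg (by nlinarith : (0:ℝ) ≤ w*(ℓ:ℝ)) (by nlinarith : (0:ℝ) ≤ 4*(ℓ:ℝ))]
    have hnn : 0 ≤ (4 * (ℓ:ℝ) - a) * ((4 - w) * (ℓ:ℝ)) := by nlinarith
    have hs := Real.sqrt_nonneg ((4 * (ℓ:ℝ) - a) * ((4 - w) * (ℓ:ℝ)))
    have hsq := Real.sq_sqrt hnn
    nlinarith [hsq, hs]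
  · have hL : (1:ℝ) ≤ (ℓ:ℝ) := by exact_mod_cast hℓ
    have h8 : (0:ℝ) ≤ 8 - 2*r*(4-w) := by nlinarith
    nlinarith [mul_nonneg (by linarith : (0:ℝ) ≤ (ℓ:ℝ)-1) h8, mul_nonneg hr0 hw0.le]

lemma mem_type2 {ℓ : ℕ} (hℓ : 1 ≤ ℓ) {a : ℝ} (h1 : (ℓ:ℝ) * w ≤ a) (h2 : a ≤ 4 * (ℓ:ℝ)) :
    (8 * (ℓ:ℝ) - 2 * Real.sqrt ((4 * (ℓ:ℝ) - a) * ((4 - w) * (ℓ:ℝ)))) ∈ tauVals w a :=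
  Or.inl ⟨ℓ, hℓ, h1, h2, rfl⟩

lemma mem_type1 (hw4 : w < 4) (hnd : ∀ n : ℕ, (n : ℝ) ≠ 4 / (4 - w))
    {ℓ : ℕ} (hℓ : 1 ≤ ℓ) {r : ℝ} (hr0 : 0 ≤ r) (hr1 : r ≤ 1) :
    (8 * ((ℓ:ℝ) - 1) + 2 * (4 - (ℓ:ℝ) * (4 - w)) * r) ∈
      tauVals w (4 * ((ℓ:ℝ) - 1) + (4 - (ℓ:ℝ) * (4 - w)) * r ^ 2) := by
  have h4w : (0:ℝ) < 4 - w := by linarith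
  have hL : (1:ℝ) ≤ (ℓ:ℝ) := by exact_mod_cast hℓ
  have hΔne : 4 - (ℓ:ℝ) * (4 - w) ≠ 0 := by
    intro h
    exact hnd ℓ (by field_simp; linarith)
  refine Or.inr ⟨ℓ, hℓ, r, ⟨hr0, hr1⟩, by ring, ?_, by ring⟩
  rcases lt_or_gt_of_ne hΔne with hΔ | hΔ
  · -- Δ < 0 : ℓ > ℓ*
    right
    refine ⟨?_, ?_, ?_⟩
    · rw [div_lt_iff₀ h4w]; nlinarith
    · nlinarith [mul_nonneg (by linarith : (0:ℝ) ≤ -(4 - (ℓ:ℝ)*(4-w)))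
        (by nlinarith : (0:ℝ) ≤ 1 - r^2)]
    · nlinarith [mul_nonneg (by linarith : (0:ℝ) ≤ -(4 - (ℓ:ℝ)*(4-w))) (sq_nonneg r)]
  · left
    refine ⟨?_, ?_, ?_⟩
    · rw [lt_div_iff₀ h4w]; nlinarith
    · nlinarith [mul_nonneg hΔ.le (sq_nonneg r)]
    · nlinarith [mul_nonneg hΔ.le (by nlinarith : (0:ℝ) ≤ 1 - r^2)]

end Aux

section Aux2

variable {w : ℝ}

lemma exists_mem_le (hw0 : 0 < w) (hw4 : w < 4) (hnd : ∀ n : ℕ, (n : ℝ) ≠ 4 / (4 - w))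
    {a c : ℝ} (ha : 0 < a) (h1 : 2 * a ≤ c) (h2 : 2 * w * (⌈a / 4⌉₊ : ℝ) ≤ c) :
    ∃ t ∈ tauVals w a, t ≤ c := by
  set ℓ : ℕ := ⌈a / 4⌉₊ with hℓdef
  have hℓ1 : 1 ≤ ℓ := Nat.ceil_pos.mpr (by positivity)
  have hL : (1:ℝ) ≤ (ℓ:ℝ) := by exact_mod_cast hℓ1
  have ha4 : a ≤ 4 * (ℓ:ℝ) := by
    have := Nat.le_ceil (a / 4)
    rw [← hℓdef] at this
    linarith [(div_le_iff₀ (by norm_num : (0:ℝ) < 4)).mp this]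
  have halow : 4 * ((ℓ:ℝ) - 1) < a := by
    have := Nat.ceil_lt_add_one (by positivity : (0:ℝ) ≤ a / 4)
    rw [← hℓdef] at this
    nlinarith
  by_cases hcase : (ℓ:ℝ) * w ≤ a
  · refine ⟨_, mem_type2 hℓ1 hcase ha4, ?_⟩
    have hX : (4 * (ℓ:ℝ) - a)^2 ≤ (4 * (ℓ:ℝ) - a) * ((4 - w) * (ℓ:ℝ)) := by
      nlinarith
    have hs : (4 * (ℓ:ℝ) - a) ≤ Real.sqrt ((4 * (ℓ:ℝ) - a) * ((4 - w) * (ℓ:ℝ))) := by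
      calc (4 * (ℓ:ℝ) - a) = Real.sqrt ((4 * (ℓ:ℝ) - a)^2) := (Real.sqrt_sq (by linarith)).symm
        _ ≤ _ := Real.sqrt_le_sqrt hX
    linarith
  · push_neg at hcase
    have hΔ : (0:ℝ) < 4 - (ℓ:ℝ) * (4 - w) := by nlinarith
    set u : ℝ := (a - 4 * ((ℓ:ℝ) - 1)) / (4 - (ℓ:ℝ) * (4 - w)) with hudef
    have hu0 : 0 ≤ u := by
      apply div_nonneg _ hΔ.le; linarith
    have hu1 : u ≤ 1 := by
      rw [hudef, div_le_one hΔ]; nlinarith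
    set r : ℝ := Real.sqrt u with hrdef
    have hr0 : 0 ≤ r := Real.sqrt_nonneg u
    have hr1 : r ≤ 1 := Real.sqrt_le_one.mpr hu1
    have hr2 : r ^ 2 = u := Real.sq_sqrt hu0
    have harea : 4 * ((ℓ:ℝ) - 1) + (4 - (ℓ:ℝ) * (4 - w)) * r ^ 2 = a := by
      rw [hr2, hudef]; field_simp; ring
    have hmem := mem_type1 hw4 hnd hℓ1 hr0 hr1
    rw [harea] at hmem
    refine ⟨_, hmem, ?_⟩
    have : 8 * ((ℓ:ℝ) - 1) + 2 * (4 - (ℓ:ℝ) * (4 - w)) * r ≤ 2 * w * (ℓ:ℝ) := by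
      nlinarith [mul_nonneg hΔ.le (by linarith : (0:ℝ) ≤ 1 - r)]
    linarith

lemma tauVals_nonempty (hw0 : 0 < w) (hw4 : w < 4) (hnd : ∀ n : ℕ, (n : ℝ) ≠ 4 / (4 - w))
    {a : ℝ} (ha : 0 < a) : (tauVals w a).Nonempty := by
  obtain ⟨t, ht, -⟩ := exists_mem_le hw0 hw4 hnd ha
    (le_add_of_nonneg_right (by positivity) : 2*a ≤ 2*a + 2*w*(⌈a/4⌉₊:ℝ))
    (le_add_of_nonneg_left (by positivity))
  exact ⟨t, ht⟩

lemma bddBelow_tauVals (hw0 : 0 < w) (hw4 : w < 4) (a : ℝ) : BddBelow (tauVals w a) :=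
  ⟨0, fun _ ht => tauVals_nonneg hw0 hw4 ht⟩

lemma tauMin_le (hw0 : 0 < w) (hw4 : w < 4) {a t : ℝ} (ha : 0 ≤ a)
    (ht : t ∈ tauVals w a) : tauMin w a ≤ t := by
  rcases eq_or_lt_of_le ha with h | h
  · rw [tauMin, if_pos h.symm]
    exact tauVals_nonneg hw0 hw4 ht
  · rw [tauMin, if_neg (by positivity)]
    exact csInf_le (bddBelow_tauVals hw0 hw4 a) ht

lemma tauMin_nonneg (hw0 : 0 < w) (hw4 : w < 4) (hnd : ∀ n : ℕ, (n : ℝ) ≠ 4 / (4 - w))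
    {a : ℝ} (ha : 0 ≤ a) : 0 ≤ tauMin w a := by
  rcases eq_or_lt_of_le ha with h | h
  · simp [tauMin, ← h]
  · rw [tauMin, if_neg (by positivity)]
    exact le_csInf (tauVals_nonempty hw0 hw4 hnd h) fun t ht => tauVals_nonneg hw0 hw4 ht

end Aux2

section Aux3

variable {w : ℝ}

lemma exists_le_of_mem (hw0 : 0 < w) (hw4 : w < 4) (hnd : ∀ n : ℕ, (n : ℝ) ≠ 4 / (4 - w))
    {a' a t : ℝ} (ha' : 0 < a') (haa : a' ≤ a) (ht : t ∈ tauVals w a) :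
    ∃ t' ∈ tauVals w a', t' ≤ t := by
  have h4w : (0:ℝ) < 4 - w := by linarith
  rcases ht with ⟨ℓ, hℓ, h1, h2, rfl⟩ | ⟨ℓ, hℓ, r, ⟨hr0, hr1⟩, heq, hdisj, rfl⟩
  · -- type 2
    have hL : (1:ℝ) ≤ (ℓ:ℝ) := by exact_mod_cast hℓ
    by_cases hc : (ℓ:ℝ) * w ≤ a'
    · refine ⟨_, mem_type2 hℓ hc (le_trans haa h2), ?_⟩
      have : Real.sqrt ((4 * (ℓ:ℝ) - a) * ((4 - w) * (ℓ:ℝ))) ≤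
          Real.sqrt ((4 * (ℓ:ℝ) - a') * ((4 - w) * (ℓ:ℝ))) := by
        apply Real.sqrt_le_sqrt
        nlinarith
      linarith
    · push_neg at hc
      -- t ≥ 2wℓ
      have hXle : (4 * (ℓ:ℝ) - a) * ((4 - w) * (ℓ:ℝ)) ≤ ((4 - w) * (ℓ:ℝ))^2 := by
        nlinarith
      have hs : Real.sqrt ((4 * (ℓ:ℝ) - a) * ((4 - w) * (ℓ:ℝ))) ≤ (4 - w) * (ℓ:ℝ) := by
        calc Real.sqrt ((4 * (ℓ:ℝ) - a) * ((4 - w) * (ℓ:ℝ)))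
            ≤ Real.sqrt (((4 - w) * (ℓ:ℝ))^2) := Real.sqrt_le_sqrt hXle
          _ = (4 - w) * (ℓ:ℝ) := Real.sqrt_sq (by nlinarith)
      have ht2 : 2 * w * (ℓ:ℝ) ≤ 8 * (ℓ:ℝ) - 2 * Real.sqrt ((4 * (ℓ:ℝ) - a) * ((4 - w) * (ℓ:ℝ))) := by
        nlinarith
      have hceil : (⌈a' / 4⌉₊ : ℝ) ≤ (ℓ:ℝ) := by
        have : ⌈a' / 4⌉₊ ≤ ℓ := Nat.ceil_le.mpr (by nlinarith)
        exact_mod_cast this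
      obtain ⟨t', ht', hle⟩ := exists_mem_le hw0 hw4 hnd ha'
        (by nlinarith : 2 * a' ≤ 2 * w * (ℓ:ℝ)) (by nlinarith)
      exact ⟨t', ht', le_trans hle ht2⟩
  · -- type 1
    have hL : (1:ℝ) ≤ (ℓ:ℝ) := by exact_mod_cast hℓ
    set Δ : ℝ := 4 - (ℓ:ℝ) * (4 - w) with hΔdef
    have ha2 : a = 4 * ((ℓ:ℝ) - 1) + Δ * r ^ 2 := by rw [← heq, hΔdef]; ring
    have htt : ((ℓ:ℝ) - 1) * (8 - 2 * r * (4 - w)) + 2 * r * w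
        = 8 * ((ℓ:ℝ) - 1) + 2 * Δ * r := by rw [hΔdef]; ring
    rw [htt]
    have hΔne : Δ ≠ 0 := by
      intro h
      exact hnd ℓ (by rw [hΔdef] at h; field_simp; linarith)
    rcases lt_or_gt_of_ne hΔne with hΔ | hΔ
    · -- Δ < 0, branch covers [ℓw, 4(ℓ-1)]
      by_cases hc : (ℓ:ℝ) * w ≤ a'
      · set u : ℝ := (4 * ((ℓ:ℝ) - 1) - a') / (-Δ) with hudef
        have hΔpos : (0:ℝ) < -Δ := by linarith
        have hu0 : 0 ≤ u := by
          apply div_nonneg _ hΔpos.le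
          nlinarith [mul_nonneg (by linarith : (0:ℝ) ≤ -Δ) (sq_nonneg r)]
        have hu1 : u ≤ 1 := by
          rw [hudef, div_le_one hΔpos]; nlinarith
        set r' : ℝ := Real.sqrt u with hr'def
        have hr'0 : 0 ≤ r' := Real.sqrt_nonneg u
        have hr'1 : r' ≤ 1 := Real.sqrt_le_one.mpr hu1
        have hr'2 : r' ^ 2 = u := Real.sq_sqrt hu0
        have harea : 4 * ((ℓ:ℝ) - 1) + Δ * r' ^ 2 = a' := by
          rw [hr'2, hudef]; field_simp; ring
        have hrr : r ≤ r' := by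
          have hru : r ^ 2 ≤ u := by
            rw [hudef, le_div_iff₀ hΔpos]; nlinarith
          calc r = Real.sqrt (r ^ 2) := (Real.sqrt_sq hr0).symm
            _ ≤ Real.sqrt u := Real.sqrt_le_sqrt hru
        have hmem := mem_type1 hw4 hnd hℓ hr'0 hr'1
        rw [← hΔdef] at hmem
        rw [harea] at hmem
        exact ⟨_, hmem, by nlinarith⟩
      · push_neg at hc
        have htge : 2 * w * (ℓ:ℝ) ≤ 8 * ((ℓ:ℝ) - 1) + 2 * Δ * r := by
          rw [hΔdef]; nlinarith [mul_nonneg (by linarith : (0:ℝ) ≤ -Δ) (by linarith : (0:ℝ) ≤ 1 - r)]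
        have hceil : (⌈a' / 4⌉₊ : ℝ) ≤ (ℓ:ℝ) := by
          have : ⌈a' / 4⌉₊ ≤ ℓ := Nat.ceil_le.mpr (by nlinarith)
          exact_mod_cast this
        obtain ⟨t', ht', hle⟩ := exists_mem_le hw0 hw4 hnd ha'
          (by nlinarith : 2 * a' ≤ 2 * w * (ℓ:ℝ)) (by nlinarith)
        exact ⟨t', ht', le_trans hle htge⟩
    · -- Δ > 0, branch covers [4(ℓ-1), ℓw]
      by_cases hc : 4 * ((ℓ:ℝ) - 1) ≤ a'
      · set u : ℝ := (a' - 4 * ((ℓ:ℝ) - 1)) / Δ with hudef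
        have hu0 : 0 ≤ u := div_nonneg (by linarith) hΔ.le
        have hru : u ≤ r ^ 2 := by
          rw [hudef, div_le_iff₀ hΔ]; nlinarith
        have hu1 : u ≤ 1 := le_trans hru (by nlinarith)
        set r' : ℝ := Real.sqrt u with hr'def
        have hr'0 : 0 ≤ r' := Real.sqrt_nonneg u
        have hr'1 : r' ≤ 1 := Real.sqrt_le_one.mpr hu1
        have hr'2 : r' ^ 2 = u := Real.sq_sqrt hu0
        have harea : 4 * ((ℓ:ℝ) - 1) + Δ * r' ^ 2 = a' := by
          rw [hr'2, hudef]; field_simp; ring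
        have hrr : r' ≤ r := by
          calc r' = Real.sqrt u := rfl
            _ ≤ Real.sqrt (r ^ 2) := Real.sqrt_le_sqrt hru
            _ = r := Real.sqrt_sq hr0
        have hmem := mem_type1 hw4 hnd hℓ hr'0 hr'1
        rw [← hΔdef] at hmem
        rw [harea] at hmem
        exact ⟨_, hmem, by nlinarith⟩
      · push_neg at hc
        have hL2 : (2:ℝ) ≤ (ℓ:ℝ) := by
          have : (1:ℝ) < (ℓ:ℝ) := by nlinarith
          have h2 : (1:ℕ) < ℓ := by exact_mod_cast this
          exact_mod_cast h2
        have htge : 8 * ((ℓ:ℝ) - 1) ≤ 8 * ((ℓ:ℝ) - 1) + 2 * Δ * r := by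
          nlinarith [mul_nonneg hΔ.le hr0]
        have hceil : (⌈a' / 4⌉₊ : ℝ) ≤ (ℓ:ℝ) - 1 := by
          have h1 : ⌈a' / 4⌉₊ ≤ ℓ - 1 := Nat.ceil_le.mpr (by
            push_cast [Nat.cast_sub hℓ]
            nlinarith)
          have := (Nat.cast_le (α := ℝ)).mpr h1
          rw [Nat.cast_sub hℓ] at this
          exact_mod_cast this
        obtain ⟨t', ht', hle⟩ := exists_mem_le hw0 hw4 hnd ha'
          (by nlinarith : 2 * a' ≤ 8 * ((ℓ:ℝ) - 1)) (by nlinarith)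
        exact ⟨t', ht', le_trans hle htge⟩

end Aux3

section Aux4

variable {w : ℝ}

lemma tauMin_mono (hw0 : 0 < w) (hw4 : w < 4) (hnd : ∀ n : ℕ, (n : ℝ) ≠ 4 / (4 - w))
    {a' a : ℝ} (ha' : 0 ≤ a') (haa : a' ≤ a) : tauMin w a' ≤ tauMin w a := by
  rcases eq_or_lt_of_le ha' with h | h
  · rw [tauMin, if_pos h.symm]
    exact tauMin_nonneg hw0 hw4 hnd (le_trans ha' haa)
  · have haq : 0 < a := lt_of_lt_of_le h haa
    have e1 : tauMin w a' = sInf (tauVals w a') := by rw [tauMin, if_neg h.ne']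
    have e2 : tauMin w a = sInf (tauVals w a) := by rw [tauMin, if_neg haq.ne']
    rw [e1, e2]
    apply le_csInf (tauVals_nonempty hw0 hw4 hnd haq)
    intro t ht
    obtain ⟨t', ht', hle⟩ := exists_le_of_mem hw0 hw4 hnd h haa ht
    exact le_trans (csInf_le (bddBelow_tauVals hw0 hw4 a') ht') hle

lemma tauMin_step (hw0 : 0 < w) (hw4 : w < 4) (hnd : ∀ n : ℕ, (n : ℝ) ≠ 4 / (4 - w))
    {a : ℝ} (ha : 0 ≤ a) : tauMin w (a + w) ≤ tauMin w a + 8 := by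
  rcases eq_or_lt_of_le ha with h | h
  · -- a = 0
    have e : tauMin w a = 0 := by rw [tauMin, if_pos h.symm]
    rw [e]
    have hceil : (⌈w / 4⌉₊ : ℝ) ≤ 1 := by
      have : ⌈w / 4⌉₊ ≤ 1 := Nat.ceil_le.mpr (by push_cast; linarith)
      exact_mod_cast this
    have hc : (0:ℝ) ≤ (⌈w / 4⌉₊ : ℝ) := Nat.cast_nonneg _
    obtain ⟨t, ht, hle⟩ := exists_mem_le hw0 hw4 hnd hw0
      (by linarith : 2 * w ≤ (8:ℝ)) (by nlinarith)
    have hmem : t ∈ tauVals w (a + w) := by rw [← h, zero_add]; exact ht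
    have := tauMin_le hw0 hw4 (by linarith : (0:ℝ) ≤ a + w) hmem
    linarith
  · -- a > 0 : for each t ∈ tauVals w a we find t₊ at area a₊ ≥ a + w with t₊ ≤ t + 8
    have key : ∀ t ∈ tauVals w a, tauMin w (a + w) ≤ t + 8 := by
      intro t ht
      have h4w : (0:ℝ) < 4 - w := by linarith
      rcases ht with ⟨ℓ, hℓ, h1, h2, rfl⟩ | ⟨ℓ, hℓ, r, ⟨hr0, hr1⟩, heq, hdisj, rfl⟩
      · -- type 2 : go to (ℓ+1, a+4)
        have hL : (1:ℝ) ≤ (ℓ:ℝ) := by exact_mod_cast hℓ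
        have hmem := mem_type2 (w := w) (ℓ := ℓ + 1) (Nat.le_succ_of_le hℓ)
          (a := a + 4) (by push_cast; nlinarith) (by push_cast; nlinarith)
        have hmono := tauMin_mono hw0 hw4 hnd (by linarith : (0:ℝ) ≤ a + w)
          (by linarith : a + w ≤ a + 4)
        have hle := tauMin_le hw0 hw4 (by linarith : (0:ℝ) ≤ a + 4) hmem
        have hsq : Real.sqrt ((4 * (ℓ:ℝ) - a) * ((4 - w) * (ℓ:ℝ))) ≤
            Real.sqrt ((4 * ((ℓ:ℕ)+1:ℝ) - (a+4)) * ((4 - w) * ((ℓ:ℕ)+1:ℝ))) := by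
          apply Real.sqrt_le_sqrt
          push_cast
          nlinarith
        push_cast at hle hsq ⊢
        nlinarith [hmono, hle, hsq]
      · -- type 1 : go to (ℓ+1, same r)
        have hL : (1:ℝ) ≤ (ℓ:ℝ) := by exact_mod_cast hℓ
        have ha2 : a = 4 * ((ℓ:ℝ) - 1) + (4 - (ℓ:ℝ) * (4 - w)) * r ^ 2 := by
          rw [← heq]; ring
        have hmem := mem_type1 hw4 hnd (ℓ := ℓ + 1) (Nat.le_succ_of_le hℓ) hr0 hr1
        have hA : ((ℓ+1:ℕ):ℝ) = (ℓ:ℝ) + 1 := by push_cast; ring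
        rw [hA] at hmem
        have hstep : a + w ≤ 4 * ((ℓ:ℝ) + 1 - 1) + (4 - ((ℓ:ℝ) + 1) * (4 - w)) * r ^ 2 := by
          rw [ha2]
          nlinarith [mul_nonneg h4w.le (by nlinarith : (0:ℝ) ≤ 1 - r^2)]
        have hmono := tauMin_mono hw0 hw4 hnd (by linarith : (0:ℝ) ≤ a + w) hstep
        have hle := tauMin_le hw0 hw4
          (le_trans (by linarith : (0:ℝ) ≤ a + w) hstep) hmem
        have hval : 8 * ((ℓ:ℝ) + 1 - 1) + 2 * (4 - ((ℓ:ℝ) + 1) * (4 - w)) * r ≤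
            (((ℓ:ℝ) - 1) * (8 - 2 * r * (4 - w)) + 2 * r * w) + 8 := by
          nlinarith [mul_nonneg h4w.le hr0]
        linarith
    have e2 : tauMin w a = sInf (tauVals w a) := by rw [tauMin, if_neg h.ne']
    rw [e2]
    have := le_csInf (tauVals_nonempty hw0 hw4 hnd h)
      (fun t ht => by linarith [key t ht] : ∀ t ∈ tauVals w a, tauMin w (a + w) - 8 ≤ t)
    linarith

end Aux4

section Main

noncomputable def G2fun (w δ D : ℝ) (ℓ : ℕ) (x : ℝ) : ℝ :=
  (8 * (ℓ:ℝ) - 2 * Real.sqrt ((4 * (ℓ:ℝ) - x) * ((4 - w) * (ℓ:ℝ)))) + (δ - x)^2/(2*D)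

noncomputable def G1fun (w δ D : ℝ) (ℓ : ℕ) (r : ℝ) : ℝ :=
  (((ℓ:ℝ) - 1) * (8 - 2 * r * (4 - w)) + 2 * r * w)
    + (δ - (4 * ((ℓ:ℝ) - 1) + (4 - (ℓ:ℝ) * (4 - w)) * r ^ 2))^2/(2*D)

lemma exists_min_G2 (w δ D : ℝ) (hw4 : w ≤ 4) (ℓ : ℕ) :
    ∃ x, x ∈ Set.Icc ((ℓ:ℝ)*w) (4*(ℓ:ℝ)) ∧
      ∀ y ∈ Set.Icc ((ℓ:ℝ)*w) (4*(ℓ:ℝ)), G2fun w δ D ℓ x ≤ G2fun w δ D ℓ y := by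
  have hne : ((ℓ:ℝ)*w) ≤ 4*(ℓ:ℝ) := by nlinarith [Nat.cast_nonneg (α := ℝ) ℓ]
  have hc : Continuous (G2fun w δ D ℓ) := by
    unfold G2fun
    apply Continuous.add
    · exact Continuous.sub continuous_const (Continuous.mul continuous_const
        (((continuous_const.sub continuous_id).mul continuous_const).sqrt))
    · exact Continuous.div_const ((continuous_const.sub continuous_id).pow 2) _
  obtain ⟨x, hx, hmin⟩ := isCompact_Icc.exists_isMinOn (Set.nonempty_Icc.mpr hne)
    hc.continuousOn
  exact ⟨x, hx, fun y hy => isMinOn_iff.mp hmin y hy⟩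

lemma exists_min_G1 (w δ D : ℝ) (ℓ : ℕ) :
    ∃ r, r ∈ Set.Icc (0:ℝ) 1 ∧
      ∀ s ∈ Set.Icc (0:ℝ) 1, G1fun w δ D ℓ r ≤ G1fun w δ D ℓ s := by
  have hc : Continuous (G1fun w δ D ℓ) := by
    unfold G1fun
    fun_prop
  obtain ⟨r, hr, hmin⟩ := isCompact_Icc.exists_isMinOn
    (Set.nonempty_Icc.mpr (by norm_num : (0:ℝ) ≤ 1)) hc.continuousOn
  exact ⟨r, hr, fun s hs => isMinOn_iff.mp hmin s hs⟩

end Main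

/-- for every `D > 0` there are `δ₀, C < ∞` such that for every `δ > 0`
the functional `E_δ(a) = τ(a) + (δ−a)²/(2D)` attains its minimum over `a ∈ [0, ∞)`,
and for `δ ≥ δ₀` every minimizer `a*` satisfies `0 ≤ δ − a* ≤ C`. -/
theorem minimizer_close_to_delta (w : ℝ) (hw0 : 0 < w) (hw4 : w < 4)
    (hnd : ∀ n : ℕ, (n : ℝ) ≠ 4 / (4 - w)) (D : ℝ) (hD : 0 < D) :
    ∃ δ₀ C : ℝ,
      (∀ δ : ℝ, 0 < δ → ∃ a : ℝ, 0 ≤ a ∧ ∀ b : ℝ, 0 ≤ b →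
        tauMin w a + (δ - a) ^ 2 / (2 * D) ≤ tauMin w b + (δ - b) ^ 2 / (2 * D)) ∧
      (∀ δ : ℝ, δ₀ ≤ δ → ∀ a : ℝ, 0 ≤ a →
        (∀ b : ℝ, 0 ≤ b →
          tauMin w a + (δ - a) ^ 2 / (2 * D) ≤ tauMin w b + (δ - b) ^ 2 / (2 * D)) →
        0 ≤ δ - a ∧ δ - a ≤ C) := by
  classical
  have h4w : (0:ℝ) < 4 - w := by linarith
  refine ⟨1, 8*D/w + w/2, ?_, ?_⟩
  · -- existence of a minimizer
    intro δ hδ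
    choose x2 hx2mem hx2min using fun ℓ : ℕ => exists_min_G2 w δ D hw4.le ℓ
    choose r1 hr1mem hr1min using fun ℓ : ℕ => exists_min_G1 w δ D ℓ
    set N : ℕ := ⌈2*δ/w⌉₊ + 1 with hN
    set T : Finset (ℝ × ℝ) :=
      insert ((0:ℝ), δ^2/(2*D))
        (((Finset.Icc 1 N).image fun ℓ => (x2 ℓ, G2fun w δ D ℓ (x2 ℓ))) ∪
         ((Finset.Icc 1 N).image fun ℓ : ℕ =>
            (4 * ((ℓ:ℝ) - 1) + (4 - (ℓ:ℝ) * (4 - w)) * (r1 ℓ) ^ 2, G1fun w δ D ℓ (r1 ℓ))))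
      with hT
    obtain ⟨p, hpT, hpmin⟩ := Finset.exists_min_image T Prod.snd ⟨_, Finset.mem_insert_self _ _⟩
    -- the chosen point dominates its recorded energy
    have hEp : 0 ≤ p.1 ∧ tauMin w p.1 + (δ - p.1)^2/(2*D) ≤ p.2 := by
      rcases Finset.mem_insert.mp hpT with h0 | hU
      · rw [h0]
        constructor
        · norm_num
        · have : tauMin w (0:ℝ) = 0 := by simp [tauMin]
          simp only [this]
          ring_nf
          norm_num
      · rcases Finset.mem_union.mp hU with h2 | h1
        · obtain ⟨ℓ, hℓmem, hpe⟩ := Finset.mem_image.mp h2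
          obtain ⟨hℓ1, hℓN⟩ := Finset.mem_Icc.mp hℓmem
          obtain ⟨hxlo, hxhi⟩ := hx2mem ℓ
          have hL : (1:ℝ) ≤ (ℓ:ℝ) := by exact_mod_cast hℓ1
          have hpos : 0 ≤ x2 ℓ := le_trans (by nlinarith) hxlo
          have hmem := mem_type2 hℓ1 hxlo hxhi
          have hle := tauMin_le hw0 hw4 hpos hmem
          rw [← hpe]
          refine ⟨hpos, ?_⟩
          simp only [G2fun]
          linarith
        · obtain ⟨ℓ, hℓmem, hpe⟩ := Finset.mem_image.mp h1
          obtain ⟨hℓ1, hℓN⟩ := Finset.mem_Icc.mp hℓmem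
          obtain ⟨hrlo, hrhi⟩ := hr1mem ℓ
          have hL : (1:ℝ) ≤ (ℓ:ℝ) := by exact_mod_cast hℓ1
          have hpos : 0 ≤ 4 * ((ℓ:ℝ) - 1) + (4 - (ℓ:ℝ) * (4 - w)) * (r1 ℓ) ^ 2 := by
            nlinarith [mul_nonneg (by nlinarith : (0:ℝ) ≤ 1 - (r1 ℓ)^2)
                (by nlinarith : (0:ℝ) ≤ 4 * ((ℓ:ℝ) - 1)),
              mul_nonneg (sq_nonneg (r1 ℓ)) (by nlinarith : (0:ℝ) ≤ (ℓ:ℝ) * w)]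
          have hmem := mem_type1 hw4 hnd hℓ1 hrlo hrhi
          have hle := tauMin_le hw0 hw4 hpos hmem
          rw [← hpe]
          refine ⟨hpos, ?_⟩
          simp only [G1fun]
          nlinarith [hle]
    -- every admissible value at moderate area is dominated by some candidate
    have hcov : ∀ b : ℝ, 0 < b → b ≤ 2*δ → ∀ t ∈ tauVals w b,
        ∃ p' ∈ T, p'.2 ≤ t + (δ - b)^2/(2*D) := by
      intro b hb hb2 t ht
      rcases ht with ⟨ℓ, hℓ, h1, h2, rfl⟩ | ⟨ℓ, hℓ, r, ⟨hr0, hr1⟩, heq, hdisj, rfl⟩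
      · have hℓN : ℓ ≤ N := by
          have hdw : (ℓ:ℝ) ≤ 2*δ/w := by rw [le_div_iff₀ hw0]; nlinarith
          have hc1 : (ℓ:ℝ) ≤ (⌈2*δ/w⌉₊:ℝ) := le_trans hdw (Nat.le_ceil _)
          have hc2 : ℓ ≤ ⌈2*δ/w⌉₊ := by exact_mod_cast hc1
          omega
        refine ⟨(x2 ℓ, G2fun w δ D ℓ (x2 ℓ)), ?_, ?_⟩
        · exact Finset.mem_insert_of_mem (Finset.mem_union_left _
            (Finset.mem_image_of_mem _ (Finset.mem_Icc.mpr ⟨hℓ, hℓN⟩)))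
        · have := hx2min ℓ b ⟨h1, h2⟩
          simpa [G2fun] using this
      · have hL : (1:ℝ) ≤ (ℓ:ℝ) := by exact_mod_cast hℓ
        have hℓN : ℓ ≤ N := by
          have hup : (ℓ:ℝ) ≤ 2*δ/w + 1 := by
            rcases hdisj with ⟨-, hge, -⟩ | ⟨-, hge, -⟩
            · have : (ℓ:ℝ) - 1 ≤ b/4 := by linarith
              have hb4 : b/4 ≤ 2*δ/w := by
                rw [div_le_div_iff₀ (by norm_num) hw0]; nlinarith
              linarith
            · have : (ℓ:ℝ) ≤ 2*δ/w := by rw [le_div_iff₀ hw0]; nlinarith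
              linarith
          have hc1 : (ℓ:ℝ) ≤ (⌈2*δ/w⌉₊:ℝ) + 1 := le_trans hup
            (by linarith [Nat.le_ceil (2*δ/w)])
          have hc2 : ℓ ≤ ⌈2*δ/w⌉₊ + 1 := by exact_mod_cast hc1
          omega
        refine ⟨(4 * ((ℓ:ℝ) - 1) + (4 - (ℓ:ℝ) * (4 - w)) * (r1 ℓ) ^ 2,
            G1fun w δ D ℓ (r1 ℓ)), ?_, ?_⟩
        · exact Finset.mem_insert_of_mem (Finset.mem_union_right _
            (Finset.mem_image_of_mem _ (Finset.mem_Icc.mpr ⟨hℓ, hℓN⟩)))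
        · have hmin := hr1min ℓ r ⟨hr0, hr1⟩
          have hb' : 4 * ((ℓ:ℝ) - 1) + (4 - (ℓ:ℝ) * (4 - w)) * r ^ 2 = b := by
            rw [← heq]; ring
          simp only [G1fun] at hmin ⊢
          rw [hb'] at hmin
          exact hmin
    refine ⟨p.1, hEp.1, ?_⟩
    intro b hb
    have hE := hEp.2
    have hp0 : p.2 ≤ δ^2/(2*D) := by
      simpa using hpmin ((0:ℝ), δ^2/(2*D)) (Finset.mem_insert_self _ _)
    rcases eq_or_lt_of_le hb with hb0 | hbpos
    · rw [← hb0]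
      have ht0 : tauMin w (0:ℝ) = 0 := by simp [tauMin]
      rw [ht0]
      have : (δ - 0)^2/(2*D) = δ^2/(2*D) := by ring_nf
      linarith [hE, hp0, this]
    · by_cases hble : b ≤ 2*δ
      · have hne := tauVals_nonempty hw0 hw4 hnd hbpos
        have e : tauMin w b = sInf (tauVals w b) := by rw [tauMin, if_neg hbpos.ne']
        rw [e]
        have hsinf : p.2 - (δ - b)^2/(2*D) ≤ sInf (tauVals w b) := by
          apply le_csInf hne
          intro t ht
          obtain ⟨p', hp'T, hp'le⟩ := hcov b hbpos hble t ht
          have := hpmin p' hp'T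
          linarith
        linarith
      · push_neg at hble
        have h1 : δ^2 ≤ (δ - b)^2 := by nlinarith
        have hq : δ^2/(2*D) ≤ (δ - b)^2/(2*D) := by
          rw [div_eq_mul_inv, div_eq_mul_inv]
          exact mul_le_mul_of_nonneg_right h1 (by positivity)
        have ht0 := tauMin_nonneg hw0 hw4 hnd hbpos.le
        linarith
  · -- localization of minimizers
    intro δ hδ1 a ha hminim
    have hδ0 : (0:ℝ) < δ := lt_of_lt_of_le one_pos hδ1
    constructor
    · by_contra hlt
      push_neg at hlt
      have h1 := hminim δ hδ0.le
      have h2 := tauMin_mono hw0 hw4 hnd hδ0.le (by linarith : δ ≤ a)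
      have h3 : (δ - δ)^2/(2*D) = 0 := by simp
      have h4 : 0 < (δ - a)^2/(2*D) := by
        apply div_pos _ (by linarith)
        nlinarith
      linarith
    · have h1 := hminim (a + w) (by linarith)
      have h2 := tauMin_step hw0 hw4 hnd ha
      have hXY : ((δ - a)^2 - (δ - (a+w))^2)/(2*D) ≤ 8 := by
        rw [sub_div]; linarith
      have key : (δ - a)^2 - (δ - (a+w))^2 ≤ 8*(2*D) := (div_le_iff₀ (by linarith)).mp hXY
      have h8 : w*(δ - a) ≤ 8*D + w^2/2 := by nlinarith
      have h9 : δ - a ≤ (8*D + w^2/2)/w := (le_div_iff₀ hw0).mpr (by linarith)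
      have he : (8*D + w^2/2)/w = 8*D/w + w/2 := by field_simp
      linarith
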